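/- If (U, V) is a centered jointly Gaussian pair of real random variables, then Var(UV) = E[U²]·E[V²] + (E[UV])². -/

import Mathlib

open MeasureTheory ProbabilityTheory Real Filter
open scoped NNReal ENNReal

set_option maxRecDepth 4000

namespace IsserlisAux

lemma integrable_pow_mul_exp {b : ℝ} (hb : 0 < b) (n : ℕ) :
    Integrable (fun x : ℝ => x ^ n * Real.exp (-b * x ^ 2)) := by
  have h := integrable_rpow_mul_exp_neg_mul_sq hb (s := (n : ℝ))
    (lt_of_lt_of_le neg_one_lt_zero (Nat.cast_nonneg n))
  simpa [Real.rpow_natCast] using h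

lemma tendsto_pow_mul_exp_atTop {b : ℝ} (hb : 0 < b) (n : ℕ) :
    Tendsto (fun x : ℝ => x ^ n * Real.exp (-b * x ^ 2)) atTop (nhds 0) := by
  have h := rpow_mul_exp_neg_mul_sq_isLittleO_exp_neg hb (n : ℝ)
  have h2 : Tendsto (fun x : ℝ => Real.exp (-(1/2) * x)) atTop (nhds 0) := by
    simpa using Real.tendsto_exp_comp_nhds_zero.mpr
      (by simpa using (tendsto_const_nhds.neg_mul_atTop (by norm_num : (-(1/2) : ℝ) < 0)
        tendsto_id) : Tendsto (fun x : ℝ => -(1/2) * x) atTop atBot)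
  have := h.trans_tendsto h2
  simpa [Real.rpow_natCast] using this

lemma tendsto_pow_mul_exp_atBot {b : ℝ} (hb : 0 < b) (n : ℕ) :
    Tendsto (fun x : ℝ => x ^ n * Real.exp (-b * x ^ 2)) atBot (nhds 0) := by
  have h : Tendsto (fun x : ℝ => (-1 : ℝ) ^ n * (x ^ n * Real.exp (-b * x ^ 2))) atTop (nhds 0) := by
    simpa using (tendsto_pow_mul_exp_atTop hb n).const_mul ((-1 : ℝ) ^ n)
  have h2 := h.comp tendsto_neg_atBot_atTop
  refine h2.congr fun x => ?_
  simp only [Function.comp_apply]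
  rw [neg_sq, ← mul_assoc, ← mul_pow]
  norm_num

lemma J_rec {b : ℝ} (hb : 0 < b) (n : ℕ) :
    ∫ x : ℝ, x ^ (n + 2) * Real.exp (-b * x ^ 2)
      = ((n : ℝ) + 1) / (2 * b) * ∫ x : ℝ, x ^ n * Real.exp (-b * x ^ 2) := by
  have hderiv : ∀ x : ℝ, HasDerivAt (fun x : ℝ => x ^ (n + 1) * Real.exp (-b * x ^ 2))
      (((n : ℝ) + 1) * (x ^ n * Real.exp (-b * x ^ 2))
        - 2 * b * (x ^ (n + 2) * Real.exp (-b * x ^ 2))) x := by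
    intro x
    have h1 : HasDerivAt (fun x : ℝ => x ^ (n + 1)) (((n : ℝ) + 1) * x ^ n) x := by
      simpa using hasDerivAt_pow (n + 1) x
    have h0 : HasDerivAt (fun x : ℝ => -b * x ^ 2) (-b * (2 * x)) x := by
      simpa using (hasDerivAt_pow 2 x).const_mul (-b)
    have h2 := h0.exp
    refine (h1.fun_mul h2).congr_deriv ?_
    ring
  have hint : Integrable (fun x : ℝ => ((n : ℝ) + 1) * (x ^ n * Real.exp (-b * x ^ 2))
      - 2 * b * (x ^ (n + 2) * Real.exp (-b * x ^ 2))) :=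
    ((integrable_pow_mul_exp hb n).const_mul _).sub
      ((integrable_pow_mul_exp hb (n + 2)).const_mul _)
  have h0 := integral_of_hasDerivAt_of_tendsto hderiv hint
    (tendsto_pow_mul_exp_atBot hb (n + 1)) (tendsto_pow_mul_exp_atTop hb (n + 1))
  rw [integral_sub ((integrable_pow_mul_exp hb n).const_mul _)
    ((integrable_pow_mul_exp hb (n + 2)).const_mul _), MeasureTheory.integral_const_mul, MeasureTheory.integral_const_mul]
    at h0
  have hb' : (2 : ℝ) * b ≠ 0 := by positivity
  rw [div_mul_eq_mul_div, eq_div_iff hb', mul_comm]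
  linarith [h0]

lemma J0 {b : ℝ} (hb : 0 < b) :
    ∫ x : ℝ, x ^ (0:ℕ) * Real.exp (-b * x ^ 2) = Real.sqrt (π / b) := by
  simpa using integral_gaussian b

lemma J2 {b : ℝ} (hb : 0 < b) :
    ∫ x : ℝ, x ^ (2:ℕ) * Real.exp (-b * x ^ 2) = Real.sqrt (π / b) / (2 * b) := by
  have h := J_rec hb 0
  rw [J0 hb] at h
  rw [show ((0:ℕ)+2) = 2 from rfl] at h
  rw [h]
  push_cast
  ring

lemma J4 {b : ℝ} (hb : 0 < b) :
    ∫ x : ℝ, x ^ (4:ℕ) * Real.exp (-b * x ^ 2) = 3 * Real.sqrt (π / b) / (4 * b ^ 2) := by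
  have := J_rec hb 2
  rw [J2 hb] at this
  rw [this]
  field_simp
  ring

lemma integral_gaussianReal_eq {v : ℝ≥0} (hv : v ≠ 0) (g : ℝ → ℝ) :
    ∫ x, g x ∂(gaussianReal 0 v) = ∫ x, gaussianPDFReal 0 v x * g x := by
  rw [gaussianReal_of_var_ne_zero _ hv]
  have hmeas : Measurable (fun x => Real.toNNReal (gaussianPDFReal 0 v x)) :=
    (measurable_gaussianPDFReal 0 v).real_toNNReal
  have heq : gaussianPDF 0 v
      = (fun x => ((Real.toNNReal (gaussianPDFReal 0 v x) : ℝ≥0) : ℝ≥0∞)) :=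
    funext fun x => rfl
  rw [heq, integral_withDensity_eq_integral_smul hmeas g]
  refine integral_congr_ae (Filter.Eventually.of_forall fun x => ?_)
  simp only [NNReal.smul_def, Real.coe_toNNReal _ (gaussianPDFReal_nonneg 0 v x), smul_eq_mul]

lemma integrable_pow_gaussianReal (v : ℝ≥0) (n : ℕ) :
    Integrable (fun x : ℝ => x ^ n) (gaussianReal 0 v) := by
  by_cases hv : v = 0
  · subst hv
    rw [gaussianReal_zero_var]
    refine (integrable_const ((0:ℝ) ^ n)).congr ?_
    rw [ae_dirac_eq]
    exact Filter.eventually_pure.mpr rfl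
  · have hv' : 0 < (v : ℝ) := by positivity
    rw [gaussianReal_of_var_ne_zero _ hv]
    rw [integrable_withDensity_iff (measurable_gaussianPDF 0 v)
      (Filter.Eventually.of_forall fun x => ENNReal.ofReal_lt_top)]
    have hb : (0:ℝ) < (2 * (v:ℝ))⁻¹ := by positivity
    refine (((integrable_pow_mul_exp hb n).const_mul ((Real.sqrt (2*π*(v:ℝ)))⁻¹)).congr ?_)
    refine Filter.Eventually.of_forall fun x => ?_
    have hpdf : (gaussianPDF 0 v x).toReal = gaussianPDFReal 0 v x := by
      simp only [gaussianPDF]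
      exact ENNReal.toReal_ofReal (gaussianPDFReal_nonneg 0 v x)
    show (Real.sqrt (2*π*(v:ℝ)))⁻¹ * (x ^ n * Real.exp (-(2 * (v:ℝ))⁻¹ * x ^ 2))
      = x ^ n * (gaussianPDF 0 v x).toReal
    rw [hpdf]
    simp only [gaussianPDFReal_def]
    rw [sub_zero, show -x ^ 2 / (2 * (v:ℝ)) = -(2 * (v:ℝ))⁻¹ * x ^ 2 by field_simp]
    ring

lemma sqrt_ne' {v : ℝ≥0} (hv : v ≠ 0) : Real.sqrt (2 * π * v) ≠ 0 := by
  have hv' : 0 < (v : ℝ) := by positivity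
  positivity

lemma moment_gaussianReal {v : ℝ≥0} (hv : v ≠ 0) (n : ℕ) :
    ∫ x, x ^ n ∂(gaussianReal 0 v)
      = (Real.sqrt (2 * π * v))⁻¹ * ∫ x : ℝ, x ^ n * Real.exp (-(2 * (v:ℝ))⁻¹ * x ^ 2) := by
  have hv' : 0 < (v : ℝ) := by positivity
  rw [integral_gaussianReal_eq hv]
  rw [← MeasureTheory.integral_const_mul]
  refine integral_congr_ae (Filter.Eventually.of_forall fun x => ?_)
  simp only [gaussianPDFReal_def]
  rw [sub_zero, show -x ^ 2 / (2 * (v:ℝ)) = -(2 * (v:ℝ))⁻¹ * x ^ 2 by field_simp]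
  ring

lemma moment_two_gaussianReal (v : ℝ≥0) :
    ∫ x, x ^ (2:ℕ) ∂(gaussianReal 0 v) = v := by
  by_cases hv : v = 0
  · subst hv
    rw [gaussianReal_zero_var, integral_dirac]
    simp
  · have hv' : 0 < (v : ℝ) := by positivity
    have hb : (0:ℝ) < (2 * (v:ℝ))⁻¹ := by positivity
    rw [moment_gaussianReal hv 2, J2 hb]
    have h1 : π / (2 * (v:ℝ))⁻¹ = 2 * π * v := by field_simp
    have h2 : (2 * ((2 * (v:ℝ))⁻¹)) = (v:ℝ)⁻¹ := by field_simp
    rw [h1, h2]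
    field_simp [sqrt_ne' hv]

lemma moment_four_gaussianReal (v : ℝ≥0) :
    ∫ x, x ^ (4:ℕ) ∂(gaussianReal 0 v) = 3 * (v:ℝ) ^ 2 := by
  by_cases hv : v = 0
  · subst hv
    rw [gaussianReal_zero_var, integral_dirac]
    simp
  · have hv' : 0 < (v : ℝ) := by positivity
    have hb : (0:ℝ) < (2 * (v:ℝ))⁻¹ := by positivity
    rw [moment_gaussianReal hv 4, J4 hb]
    have h1 : π / (2 * (v:ℝ))⁻¹ = 2 * π * v := by field_simp
    have h2 : (4 * ((2 * (v:ℝ))⁻¹) ^ 2) = ((v:ℝ) ^ 2)⁻¹ := by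
      field_simp
      ring
    rw [h1, h2]
    field_simp [sqrt_ne' hv]

lemma gauss_aux {Ω : Type*} [MeasurableSpace Ω] (P : Measure Ω) [IsProbabilityMeasure P]
    (X : Ω → ℝ) (hX : Measurable X) {v : ℝ≥0}
    (h : Measure.map X P = gaussianReal 0 v) :
    Integrable (fun ω => X ω ^ 2) P ∧ Integrable (fun ω => X ω ^ 4) P ∧
      (∫ ω, X ω ^ 2 ∂P) = (v : ℝ) ∧ (∫ ω, X ω ^ 4 ∂P) = 3 * (v : ℝ) ^ 2 := by
  have hint : ∀ n : ℕ, Integrable (fun ω => X ω ^ n) P := by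
    intro n
    have hi := integrable_pow_gaussianReal v n
    rw [← h] at hi
    exact (integrable_map_measure ((measurable_id.pow_const n).aestronglyMeasurable)
      hX.aemeasurable).mp hi
  have hval : ∀ n : ℕ, (∫ ω, X ω ^ n ∂P) = ∫ x, x ^ n ∂(gaussianReal 0 v) := by
    intro n
    rw [← h]
    exact (integral_map hX.aemeasurable ((measurable_id.pow_const n).aestronglyMeasurable)).symm
  exact ⟨hint 2, hint 4, by rw [hval 2, moment_two_gaussianReal],
    by rw [hval 4, moment_four_gaussianReal]⟩

end IsserlisAux

open IsserlisAux

/-- Isserlis' formula: if `(U, V)` is a centered jointly Gaussian pair of real random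
variables (i.e., every linear combination `a U + b V` is a centered Gaussian), then
`Var(UV) = E[U²] E[V²] + (E[UV])²`. -/
theorem stmt_3 {Ω : Type*} [MeasurableSpace Ω] (P : Measure Ω) [IsProbabilityMeasure P]
    (U V : Ω → ℝ) (hU : Measurable U) (hV : Measurable V)
    (hGauss : ∀ a b : ℝ, ∃ v : ℝ≥0,
      Measure.map (fun ω => a * U ω + b * V ω) P = gaussianReal 0 v) :
    variance (fun ω => U ω * V ω) P =
      (∫ ω, U ω ^ 2 ∂P) * (∫ ω, V ω ^ 2 ∂P) + (∫ ω, U ω * V ω ∂P) ^ 2 := by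
  obtain ⟨vU, hvU⟩ := hGauss 1 0
  obtain ⟨vV, hvV⟩ := hGauss 0 1
  obtain ⟨vp, hvp⟩ := hGauss 1 1
  obtain ⟨vm, hvm⟩ := hGauss 1 (-1)
  rw [show (fun ω => (1:ℝ) * U ω + 0 * V ω) = U from funext fun ω => by ring] at hvU
  rw [show (fun ω => (0:ℝ) * U ω + 1 * V ω) = V from funext fun ω => by ring] at hvV
  rw [show (fun ω => (1:ℝ) * U ω + 1 * V ω) = fun ω => U ω + V ω from funext fun ω => by ring]
    at hvp
  rw [show (fun ω => (1:ℝ) * U ω + (-1) * V ω) = fun ω => U ω - V ω from funext fun ω => by ring]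
    at hvm
  obtain ⟨iU2, iU4, mU2, mU4⟩ := gauss_aux P U hU hvU
  obtain ⟨iV2, iV4, mV2, mV4⟩ := gauss_aux P V hV hvV
  obtain ⟨iS2, iS4, mS2, mS4⟩ := gauss_aux P (fun ω => U ω + V ω) (hU.add hV) hvp
  obtain ⟨iD2, iD4, mD2, mD4⟩ := gauss_aux P (fun ω => U ω - V ω) (hU.sub hV) hvm
  -- (i) vp + vm = 2 vU + 2 vV
  have e1 : (vp : ℝ) + (vm : ℝ) = 2 * (vU : ℝ) + 2 * (vV : ℝ) := by
    have h1 : ∫ ω, ((U ω + V ω) ^ 2 + (U ω - V ω) ^ 2) ∂P = (vp : ℝ) + vm := by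
      rw [integral_add iS2 iD2, mS2, mD2]
    have h2 : ∫ ω, ((U ω + V ω) ^ 2 + (U ω - V ω) ^ 2) ∂P
        = ∫ ω, (2 * U ω ^ 2 + 2 * V ω ^ 2) ∂P :=
      integral_congr_ae (Filter.Eventually.of_forall fun ω => by ring)
    rw [h2, integral_add (iU2.const_mul 2) (iV2.const_mul 2),
      MeasureTheory.integral_const_mul, MeasureTheory.integral_const_mul, mU2, mV2] at h1
    linarith
  -- (ii) E[UV]
  have e2 : ∫ ω, U ω * V ω ∂P = ((vp : ℝ) - vm) / 4 := by
    have h2 : ∫ ω, U ω * V ω ∂P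
        = ∫ ω, (((U ω + V ω) ^ 2 - (U ω - V ω) ^ 2) / 4) ∂P :=
      integral_congr_ae (Filter.Eventually.of_forall fun ω => by ring)
    rw [h2, integral_div, integral_sub iS2 iD2, mS2, mD2]
  have iUV : Integrable (fun ω => U ω * V ω) P := by
    have hI : Integrable (fun ω => ((U ω + V ω) ^ 2 - (U ω - V ω) ^ 2) / 4) P :=
      (iS2.sub iD2).div_const 4
    exact hI.congr (Filter.Eventually.of_forall fun ω => by ring)
  -- (iii) E[(UV)^2]
  have iA : Integrable (fun ω => (U ω + V ω) ^ 4 + (U ω - V ω) ^ 4) P := iS4.add iD4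
  have iB : Integrable (fun ω => 2 * U ω ^ 4 + 2 * V ω ^ 4) P :=
    (iU4.const_mul 2).add (iV4.const_mul 2)
  have iUV2 : Integrable (fun ω => (U ω * V ω) ^ 2) P := by
    have hI : Integrable (fun ω => ((U ω + V ω) ^ 4 + (U ω - V ω) ^ 4
        - (2 * U ω ^ 4 + 2 * V ω ^ 4)) / 12) P := (iA.sub iB).div_const 12
    exact hI.congr (Filter.Eventually.of_forall fun ω => by ring)
  have e3 : ∫ ω, (U ω * V ω) ^ 2 ∂P
      = (3 * (vp : ℝ) ^ 2 + 3 * (vm : ℝ) ^ 2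
          - (2 * (3 * (vU : ℝ) ^ 2) + 2 * (3 * (vV : ℝ) ^ 2))) / 12 := by
    have h2 : ∫ ω, (U ω * V ω) ^ 2 ∂P
        = ∫ ω, (((U ω + V ω) ^ 4 + (U ω - V ω) ^ 4
            - (2 * U ω ^ 4 + 2 * V ω ^ 4)) / 12) ∂P :=
      integral_congr_ae (Filter.Eventually.of_forall fun ω => by ring)
    rw [h2, integral_div, integral_sub iA iB,
      integral_add iS4 iD4, integral_add (iU4.const_mul 2) (iV4.const_mul 2),
      MeasureTheory.integral_const_mul, MeasureTheory.integral_const_mul,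
      mS4, mD4, mU4, mV4]
  -- variance
  have hmem : MemLp (fun ω => U ω * V ω) 2 P :=
    (memLp_two_iff_integrable_sq ((hU.mul hV).aestronglyMeasurable)).mpr iUV2
  rw [variance_eq_sub hmem]
  simp only [Pi.pow_apply]
  rw [e3, e2, mU2, mV2]
  linear_combination (((vp : ℝ) + vm + 2 * vU + 2 * vV) / 8) * e1
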